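/- Let (L, Δ, S) be a locality and define O_p(L) = ⋂{S_w : w ∈ W(L)}. Then O_p(L) is the unique largest subgroup of S that is a partial normal subgroup of L. -/

import Mathlib

universe u

structure PartialGroupOn (L : Type u) : Type u where
  nonempty : Nonempty L
  D : Set (List L)
  Pi : List L → L
  inv : L → L
  mem_single : ∀ x : L, [x] ∈ D
  mem_append_left : ∀ u v : List L, u ++ v ∈ D → u ∈ D
  mem_append_right : ∀ u v : List L, u ++ v ∈ D → v ∈ D
  Pi_single : ∀ x : L, Pi [x] = x
  mem_assoc : ∀ u v w : List L, u ++ v ++ w ∈ D → u ++ [Pi v] ++ w ∈ D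
  Pi_assoc : ∀ u v w : List L, u ++ v ++ w ∈ D →
    Pi (u ++ v ++ w) = Pi (u ++ [Pi v] ++ w)
  inv_inv : ∀ x : L, inv (inv x) = x
  mem_inv : ∀ w ∈ D, (w.reverse.map inv) ++ w ∈ D
  Pi_inv : ∀ w ∈ D, Pi ((w.reverse.map inv) ++ w) = Pi []

namespace PartialGroupOn

variable {L : Type u} (M : PartialGroupOn L)

/-- The inverse of a word: reverse the word and invert each entry. -/
def wordInv (w : List L) : List L := w.reverse.map M.inv

/-- The identity element `1 = Π(∅)`. -/
def one : L := M.Pi []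

/-- Conjugation `x ↦ x^g = Π(g⁻¹, x, g)`. -/
def conj (x g : L) : L := M.Pi [M.inv g, x, g]

/-- `D(g)` is the set of `x` for which `x^g` is defined. -/
def Dg (g : L) : Set L := {x | [M.inv g, x, g] ∈ M.D}

/-- A partial subgroup: a nonempty subset closed under inversion and under the
product applied to words in `D` with entries in the subset. -/
def IsPartialSubgroup (H : Set L) : Prop :=
  H.Nonempty ∧ (∀ x ∈ H, M.inv x ∈ H) ∧
    ∀ w : List L, (∀ x ∈ w, x ∈ H) → w ∈ M.D → M.Pi w ∈ H

/-- A partial normal subgroup of `L`. -/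
def IsPartialNormal (N : Set L) : Prop :=
  M.IsPartialSubgroup N ∧
    ∀ x ∈ N, ∀ g : L, [M.inv g, x, g] ∈ M.D → M.conj x g ∈ N

/-- A subgroup of `L`: a partial subgroup `H` with `W(H) ⊆ D`. -/
def IsSubgroup (H : Set L) : Prop :=
  M.IsPartialSubgroup H ∧ ∀ w : List L, (∀ x ∈ w, x ∈ H) → w ∈ M.D

/-- `X ⊆ D(g)`, i.e. `X^g` is defined. -/
def setConjDef (X : Set L) (g : L) : Prop := ∀ x ∈ X, [M.inv g, x, g] ∈ M.D

/-- The conjugate set `X^g`. -/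
def setConj (X : Set L) (g : L) : Set L := {y | ∃ x ∈ X, y = M.conj x g}

/-- `viaChain Δ w X` says that `w = (g₁,…,gₙ)` is in `D` via the chain
`X = X₀, X₁ = X₀^{g₁}, …` of members of `Δ`. -/
def viaChain (Δ : Set (Set L)) : List L → Set L → Prop
  | [], X => X ∈ Δ
  | g :: w, X => X ∈ Δ ∧ M.setConjDef X g ∧ viaChain Δ w (M.setConj X g)

/-- `(L, Δ)` is an objective partial group: every member of `Δ` is a subgroup,
(O1) `D = D_Δ`, and (O2) the overgroup-closure condition. -/
def Objective (Δ : Set (Set L)) : Prop :=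
  (∀ X ∈ Δ, M.IsSubgroup X) ∧
  (M.D = {w | ∃ X : Set L, M.viaChain Δ w X}) ∧
  (∀ X ∈ Δ, ∀ Y ∈ Δ, ∀ g : L, M.setConjDef X g → M.IsSubgroup (M.setConj X g) →
    M.setConj X g ⊆ Y →
    ∀ Z : Set L, M.IsSubgroup Z → M.setConj X g ⊆ Z → Z ⊆ Y → Z ∈ Δ)

/-- The normalizer `N_L(X) = {g : X^g = X}`. -/
def normalizer (X : Set L) : Set L := {g | M.setConjDef X g ∧ M.setConj X g = X}

/-- `S_g = {x ∈ D(g) ∩ S : x^g ∈ S}`. -/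
def Sg (S : Set L) (g : L) : Set L :=
  {x | x ∈ S ∧ [M.inv g, x, g] ∈ M.D ∧ M.conj x g ∈ S}

/-- `S_w`: the set of `x ∈ S` successively conjugated into `S` by the entries
of the word `w`. -/
def Sw (S : Set L) : List L → Set L
  | [] => S
  | g :: w => {x | x ∈ S ∧ [M.inv g, x, g] ∈ M.D ∧ M.conj x g ∈ Sw S w}

/-- A `p`-subgroup: a subgroup whose cardinality is a power of `p`. -/
def IsPSubgroup (p : ℕ) (H : Set L) : Prop :=
  M.IsSubgroup H ∧ ∃ n : ℕ, Nat.card H = p ^ n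

/-- `(L, Δ, S)` is a locality. -/
def IsLocality (p : ℕ) (Δ : Set (Set L)) (S : Set L) : Prop :=
  p.Prime ∧ Finite L ∧ S ∈ Δ ∧ (∀ X ∈ Δ, X ⊆ S) ∧ M.Objective Δ ∧
    M.IsPSubgroup p S ∧
    ∀ H : Set L, M.IsPSubgroup p H → S ⊆ H → H = S

/-- The product set `XY` of two subsets of `L`. -/
def setProd (X Y : Set L) : Set L :=
  {z | ∃ a ∈ X, ∃ b ∈ Y, [a, b] ∈ M.D ∧ z = M.Pi [a, b]}

/-- A homomorphism of partial groups. -/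
def IsHom {L' : Type u} (M' : PartialGroupOn L') (β : L → L') : Prop :=
  (∀ w ∈ M.D, w.map β ∈ M'.D) ∧ ∀ w ∈ M.D, β (M.Pi w) = M'.Pi (w.map β)

end PartialGroupOn
namespace PartialGroupOn

variable {L : Type u} {M : PartialGroupOn L}

lemma nil_mem : ([] : List L) ∈ M.D := by
  obtain ⟨x⟩ := M.nonempty
  exact M.mem_append_right [x] [] (by simpa using M.mem_single x)

lemma cons_one_mem {w : List L} (h : w ∈ M.D) : (M.one :: w) ∈ M.D := by
  have := M.mem_assoc [] [] w (by simpa using h)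
  simpa [one] using this

lemma pi_cons_one {w : List L} (h : w ∈ M.D) : M.Pi (M.one :: w) = M.Pi w := by
  have := M.Pi_assoc [] [] w (by simpa using h)
  simp only [List.nil_append] at this
  simpa [one] using this.symm

lemma append_one_mem {w : List L} (h : w ∈ M.D) : w ++ [M.one] ∈ M.D := by
  have := M.mem_assoc w [] [] (by simpa using h)
  simpa [one] using this

lemma pi_append_one {w : List L} (h : w ∈ M.D) : M.Pi (w ++ [M.one]) = M.Pi w := by
  have := M.Pi_assoc w [] [] (by simpa using h)
  simp only [List.append_nil] at this
  simpa [one] using this.symm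

lemma wordInv_append (u v : List L) : M.wordInv (u ++ v) = M.wordInv v ++ M.wordInv u := by
  simp [wordInv]

lemma wordInv_wordInv (w : List L) : M.wordInv (M.wordInv w) = w := by
  simp [wordInv, List.map_reverse, List.map_map, Function.comp_def, M.inv_inv]

lemma wordInv_append_self_mem {w : List L} (h : w ∈ M.D) : M.wordInv w ++ w ∈ M.D :=
  M.mem_inv w h

lemma pi_wordInv_append_self {w : List L} (h : w ∈ M.D) :
    M.Pi (M.wordInv w ++ w) = M.one := M.Pi_inv w h

lemma wordInv_mem {w : List L} (h : w ∈ M.D) : M.wordInv w ∈ M.D :=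
  M.mem_append_left _ _ (wordInv_append_self_mem h)

lemma self_append_wordInv_mem {w : List L} (h : w ∈ M.D) : w ++ M.wordInv w ∈ M.D := by
  have := wordInv_append_self_mem (wordInv_mem h)
  rwa [wordInv_wordInv] at this

lemma pi_self_append_wordInv {w : List L} (h : w ∈ M.D) : M.Pi (w ++ M.wordInv w) = M.one := by
  have := pi_wordInv_append_self (wordInv_mem h)
  rwa [wordInv_wordInv] at this

lemma inv_pair_mem (x : L) : [M.inv x, x] ∈ M.D := by
  simpa [wordInv] using wordInv_append_self_mem (M.mem_single x)

lemma pi_inv_pair (x : L) : M.Pi [M.inv x, x] = M.one := by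
  simpa [wordInv] using pi_wordInv_append_self (M.mem_single x)

lemma pair_inv_mem (x : L) : [x, M.inv x] ∈ M.D := by
  simpa [wordInv] using self_append_wordInv_mem (M.mem_single x)

lemma pi_pair_inv (x : L) : M.Pi [x, M.inv x] = M.one := by
  simpa [wordInv] using pi_self_append_wordInv (M.mem_single x)

lemma pair_one_mem (x : L) : [x, M.one] ∈ M.D := by
  simpa using append_one_mem (M.mem_single x)

lemma pi_pair_one (x : L) : M.Pi [x, M.one] = x := by
  have := pi_append_one (M.mem_single x)
  simpa [M.Pi_single] using this

lemma one_pair_mem (x : L) : [M.one, x] ∈ M.D := cons_one_mem (M.mem_single x)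

lemma pi_one_pair (x : L) : M.Pi [M.one, x] = x := by
  have := pi_cons_one (M.mem_single x)
  simpa [M.Pi_single] using this

lemma inv_one : M.inv M.one = M.one := by
  have h1 := pi_inv_pair (M := M) M.one
  have h2 := pi_append_one (M.mem_single (M.inv M.one))
  rw [M.Pi_single] at h2
  have h2' : M.Pi [M.inv M.one, M.one] = M.inv M.one := by simpa using h2
  exact h2'.symm.trans h1

lemma eq_inv_of_pi_pair {x y : L} (h : [x, y] ∈ M.D) (h1 : M.Pi [x, y] = M.one) :
    y = M.inv x := by
  have t : [M.inv y, M.inv x, x, y] ∈ M.D := by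
    simpa [wordInv] using wordInv_append_self_mem h
  have sub1 : [M.inv x, x, y] ∈ M.D := M.mem_append_right [M.inv y] _ t
  have hA : M.Pi [M.inv x, x, y] = M.inv x := by
    have A := M.Pi_assoc [M.inv x] [x, y] [] (by simpa using sub1)
    simp only [List.append_nil, List.cons_append, List.nil_append] at A
    rw [h1] at A
    rw [pi_pair_one] at A
    exact A
  have hB : M.Pi [M.inv x, x, y] = y := by
    have B := M.Pi_assoc [] [M.inv x, x] [y] (by simpa using sub1)
    simp only [List.nil_append, List.cons_append] at B
    rw [pi_inv_pair] at B
    rw [pi_one_pair] at B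
    exact B
  rw [← hB, hA]

lemma pi_swap_inv {x y : L} (h : [x, y] ∈ M.D) :
    [M.inv y, M.inv x] ∈ M.D ∧ M.Pi [M.inv y, M.inv x] = M.inv (M.Pi [x, y]) := by
  have t : [M.inv y, M.inv x, x, y] ∈ M.D := by
    simpa [wordInv] using wordInv_append_self_mem h
  have ht : M.Pi [M.inv y, M.inv x, x, y] = M.one := by
    simpa [wordInv, one] using pi_wordInv_append_self h
  have m1 : [M.Pi [M.inv y, M.inv x], x, y] ∈ M.D := by
    simpa using M.mem_assoc [] [M.inv y, M.inv x] [x, y] (by simpa using t)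
  have e1 : M.Pi [M.inv y, M.inv x, x, y] = M.Pi [M.Pi [M.inv y, M.inv x], x, y] := by
    simpa using M.Pi_assoc [] [M.inv y, M.inv x] [x, y] (by simpa using t)
  have m2 : [M.Pi [M.inv y, M.inv x], M.Pi [x, y]] ∈ M.D := by
    simpa using M.mem_assoc [M.Pi [M.inv y, M.inv x]] [x, y] [] (by simpa using m1)
  have e2 : M.Pi [M.Pi [M.inv y, M.inv x], x, y]
      = M.Pi [M.Pi [M.inv y, M.inv x], M.Pi [x, y]] := by
    simpa using M.Pi_assoc [M.Pi [M.inv y, M.inv x]] [x, y] [] (by simpa using m1)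
  have hone : M.Pi [M.Pi [M.inv y, M.inv x], M.Pi [x, y]] = M.one := by
    rw [← e2, ← e1, ht]
  have hinv := eq_inv_of_pi_pair m2 hone
  refine ⟨M.mem_append_left [M.inv y, M.inv x] [x, y] t, ?_⟩
  rw [hinv, M.inv_inv]

section ConjBlock

variable {g x : L}

/-- the 6-word `(g⁻¹,x,g,g⁻¹,x⁻¹,g)`. -/
lemma six_word_mem (h : [M.inv g, x, g] ∈ M.D) :
    [M.inv g, x, g, M.inv g, M.inv x, g] ∈ M.D := by
  have := self_append_wordInv_mem h
  simpa [wordInv, M.inv_inv] using this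

lemma pi_six_word (h : [M.inv g, x, g] ∈ M.D) :
    M.Pi [M.inv g, x, g, M.inv g, M.inv x, g] = M.one := by
  have := pi_self_append_wordInv h
  simpa [wordInv, M.inv_inv, one] using this

lemma twelve_word_mem (h : [M.inv g, x, g] ∈ M.D) :
    [M.inv g, x, g, M.inv g, M.inv x, g, M.inv g, x, g, M.inv g, M.inv x, g] ∈ M.D := by
  have h6 := six_word_mem h
  have := self_append_wordInv_mem h6
  simpa [wordInv, M.inv_inv] using this

/-- `(g, g⁻¹, x, g, g⁻¹) ∈ D`. -/
lemma five_mem (h : [M.inv g, x, g] ∈ M.D) :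
    [g, M.inv g, x, g, M.inv g] ∈ M.D := by
  have h12 := twelve_word_mem h
  have h1 : [M.inv g, x, g, M.inv g, M.inv x] ++
      ([g, M.inv g, x, g, M.inv g] ++ [M.inv x, g]) ∈ M.D := by
    simpa using h12
  exact M.mem_append_left _ _ (M.mem_append_right _ _ h1)

lemma four_mem (h : [M.inv g, x, g] ∈ M.D) :
    [g, M.inv g, x, g] ∈ M.D := by
  have h5 := five_mem h
  exact M.mem_append_left [g, M.inv g, x, g] [M.inv g] (by simpa using h5)

lemma conj_push_mem (h : [M.inv g, x, g] ∈ M.D) :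
    [g, M.conj x g, M.inv g] ∈ M.D := by
  have := M.mem_assoc [g] [M.inv g, x, g] [M.inv g] (by simpa using five_mem h)
  simpa [conj] using this

lemma xg_pair_mem (h : [M.inv g, x, g] ∈ M.D) : [x, g] ∈ M.D := by
  have h4 := four_mem h
  have m := M.mem_assoc [] [g, M.inv g] [x, g] (by simpa using h4)
  simp only [List.nil_append] at m
  exact M.mem_append_right [M.Pi [g, M.inv g]] [x, g] (by simpa using m)

lemma pi_g_conj (h : [M.inv g, x, g] ∈ M.D) :
    [g, M.conj x g] ∈ M.D ∧ M.Pi [g, M.conj x g] = M.Pi [x, g] := by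
  have h4 := four_mem h
  have m1 : [g, M.conj x g] ∈ M.D := by
    have := M.mem_assoc [g] [M.inv g, x, g] [] (by simpa using h4)
    simpa [conj] using this
  have e1 : M.Pi [g, M.inv g, x, g] = M.Pi [g, M.conj x g] := by
    have := M.Pi_assoc [g] [M.inv g, x, g] [] (by simpa using h4)
    simpa [conj] using this
  have e2 : M.Pi [g, M.inv g, x, g] = M.Pi [x, g] := by
    have e := M.Pi_assoc [] [g, M.inv g] [x, g] (by simpa using h4)
    simp only [List.nil_append, List.cons_append] at e
    rw [pi_pair_inv] at e
    have mxg := xg_pair_mem h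
    rw [e, pi_cons_one mxg]
  exact ⟨m1, e1.symm.trans e2⟩

lemma pi_conj_push (h : [M.inv g, x, g] ∈ M.D) :
    M.Pi [g, M.conj x g, M.inv g] = x := by
  have h5 := five_mem h
  have E1 : M.Pi [g, M.inv g, x, g, M.inv g] = M.Pi [g, M.conj x g, M.inv g] := by
    have := M.Pi_assoc [g] [M.inv g, x, g] [M.inv g] (by simpa using h5)
    simpa [conj] using this
  have m3 : [M.one, x, g, M.inv g] ∈ M.D := by
    have := M.mem_assoc [] [g, M.inv g] [x, g, M.inv g] (by simpa using h5)
    simp only [List.nil_append, List.cons_append] at this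
    rwa [pi_pair_inv] at this
  have m4 : [x, g, M.inv g] ∈ M.D := M.mem_append_right [M.one] _ m3
  have E2 : M.Pi [g, M.inv g, x, g, M.inv g] = M.Pi [M.one, x, g, M.inv g] := by
    have := M.Pi_assoc [] [g, M.inv g] [x, g, M.inv g] (by simpa using h5)
    simp only [List.nil_append, List.cons_append] at this
    rwa [pi_pair_inv] at this
  have E3 : M.Pi [M.one, x, g, M.inv g] = M.Pi [x, g, M.inv g] := pi_cons_one m4
  have E4 : M.Pi [x, g, M.inv g] = x := by
    have e := M.Pi_assoc [x] [g, M.inv g] [] (by simpa using m4)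
    simp only [List.append_nil, List.cons_append, List.nil_append] at e
    rw [pi_pair_inv] at e
    rw [e, pi_pair_one]
  rw [← E1, E2, E3, E4]

lemma conj_conj_inv_eq (h : [M.inv g, x, g] ∈ M.D) :
    M.conj (M.conj x g) (M.inv g) = x := by
  have : M.conj (M.conj x g) (M.inv g) = M.Pi [g, M.conj x g, M.inv g] := by
    simp [conj, M.inv_inv]
  rw [this, pi_conj_push h]

lemma conj_invg_memD (h : [M.inv g, x, g] ∈ M.D) :
    [M.inv (M.inv g), M.conj x g, M.inv g] ∈ M.D := by
  rw [M.inv_inv]; exact conj_push_mem h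

lemma conj_inv_mem (h : [M.inv g, x, g] ∈ M.D) : [M.inv g, M.inv x, g] ∈ M.D := by
  have h6 := six_word_mem h
  exact M.mem_append_right [M.inv g, x, g] _ (by simpa using h6)

lemma conj_inv_eq (h : [M.inv g, x, g] ∈ M.D) :
    M.conj (M.inv x) g = M.inv (M.conj x g) := by
  have h6 := six_word_mem h
  have hp6 := pi_six_word h
  have m1 : [M.conj x g, M.inv g, M.inv x, g] ∈ M.D := by
    have := M.mem_assoc [] [M.inv g, x, g] [M.inv g, M.inv x, g] (by simpa using h6)
    simpa [conj] using this
  have e1 : M.Pi [M.inv g, x, g, M.inv g, M.inv x, g]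
      = M.Pi [M.conj x g, M.inv g, M.inv x, g] := by
    have := M.Pi_assoc [] [M.inv g, x, g] [M.inv g, M.inv x, g] (by simpa using h6)
    simpa [conj] using this
  have m2 : [M.conj x g, M.conj (M.inv x) g] ∈ M.D := by
    have := M.mem_assoc [M.conj x g] [M.inv g, M.inv x, g] [] (by simpa using m1)
    simpa [conj] using this
  have e2 : M.Pi [M.conj x g, M.inv g, M.inv x, g]
      = M.Pi [M.conj x g, M.conj (M.inv x) g] := by
    have := M.Pi_assoc [M.conj x g] [M.inv g, M.inv x, g] [] (by simpa using m1)
    simpa [conj] using this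
  have hone : M.Pi [M.conj x g, M.conj (M.inv x) g] = M.one := by
    rw [← e2, ← e1, hp6]
  exact eq_inv_of_pi_pair m2 hone

lemma conj_one_right (x : L) : M.conj x M.one = x := by
  have hx := M.mem_single x
  have m1 : [x, M.one] ∈ M.D := pair_one_mem x
  have m2 : [M.one, x, M.one] ∈ M.D := cons_one_mem m1
  have : M.conj x M.one = M.Pi [M.one, x, M.one] := by simp [conj, inv_one]
  rw [this, pi_cons_one m1, pi_pair_one]

end ConjBlock



section SLemmas

variable {S : Set L} (hS : M.IsSubgroup S)

lemma Snil : ∀ x ∈ ([] : List L), x ∈ S := by simp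

lemma Scons {a : L} {l : List L} (ha : a ∈ S) (hl : ∀ x ∈ l, x ∈ S) :
    ∀ x ∈ a :: l, x ∈ S := by
  intro z hz
  rcases List.mem_cons.mp hz with rfl | hz
  · exact ha
  · exact hl z hz

include hS

lemma S_word_mem {w : List L} (hw : ∀ x ∈ w, x ∈ S) : w ∈ M.D := hS.2 w hw

lemma S_pi_mem {w : List L} (hw : ∀ x ∈ w, x ∈ S) : M.Pi w ∈ S :=
  hS.1.2.2 w hw (hS.2 w hw)

lemma S_one_mem : M.one ∈ S := S_pi_mem hS (Snil)

lemma S_inv_mem {x : L} (hx : x ∈ S) : M.inv x ∈ S := hS.1.2.1 x hx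

lemma S_pair_mem {x y : L} (hx : x ∈ S) (hy : y ∈ S) : M.Pi [x, y] ∈ S :=
  S_pi_mem hS (Scons hx (Scons hy Snil))

lemma S_conj_mem {x a : L} (hx : x ∈ S) (ha : a ∈ S) : M.conj x a ∈ S :=
  S_pi_mem hS (Scons (S_inv_mem hS ha) (Scons hx (Scons ha Snil)))

omit hS

lemma pi_cons {a : L} {w : List L} (h : a :: w ∈ M.D) (hw : w ∈ M.D) :
    M.Pi (a :: w) = M.Pi [a, M.Pi w] := by
  have := M.Pi_assoc [a] w [] (by simpa using h)
  simpa using this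

include hS

/-- conjugation composition inside `S`. -/
lemma conj_comp {x a b : L} (hx : x ∈ S) (ha : a ∈ S) (hb : b ∈ S) :
    M.conj (M.conj x a) b = M.conj x (M.Pi [a, b]) := by
  have hwords : ∀ u : List L, (∀ z ∈ u, z ∈ S) → u ∈ M.D := fun u hu => S_word_mem hS hu
  have hib := S_inv_mem hS hb
  have hia := S_inv_mem hS ha
  have hW : [M.inv b, M.inv a, x, a, b] ∈ M.D :=
    hwords _ (Scons hib (Scons hia (Scons hx (Scons ha (Scons hb Snil)))))
  have e1 : M.Pi [M.inv b, M.inv a, x, a, b] = M.Pi [M.inv b, M.conj x a, b] := by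
    have := M.Pi_assoc [M.inv b] [M.inv a, x, a] [b] (by simpa using hW)
    simpa [conj] using this
  have e2 : M.Pi [M.inv b, M.inv a, x, a, b]
      = M.Pi [M.Pi [M.inv b, M.inv a], x, a, b] := by
    have := M.Pi_assoc [] [M.inv b, M.inv a] [x, a, b] (by simpa using hW)
    simpa using this
  have m2 : [M.Pi [M.inv b, M.inv a], x, a, b] ∈ M.D := by
    have := M.mem_assoc [] [M.inv b, M.inv a] [x, a, b] (by simpa using hW)
    simpa using this
  have e3 : M.Pi [M.Pi [M.inv b, M.inv a], x, a, b]
      = M.Pi [M.Pi [M.inv b, M.inv a], x, M.Pi [a, b]] := by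
    have := M.Pi_assoc [M.Pi [M.inv b, M.inv a], x] [a, b] [] (by simpa using m2)
    simpa using this
  have hswap := pi_swap_inv (M := M) (x := a) (y := b)
    (hwords _ (Scons ha (Scons hb Snil)))
  have : M.conj x (M.Pi [a, b]) = M.Pi [M.Pi [M.inv b, M.inv a], x, M.Pi [a, b]] := by
    rw [conj, hswap.2]
  rw [conj, ← e1, e2, e3, this]

omit hS in
/-- `x ↦ x⁻¹ a x` undoes itself: `(x^{a⁻¹})^a = x`, general version. -/
lemma conj_invconj {x a : L} (h : [a, x, M.inv a] ∈ M.D) :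
    M.conj (M.conj x (M.inv a)) a = x := by
  have h' : [M.inv (M.inv a), x, M.inv a] ∈ M.D := by rwa [M.inv_inv]
  have := conj_conj_inv_eq h'
  rwa [M.inv_inv] at this

omit hS

/-- conj by a member fixes a subgroup (as a set). -/
lemma setConj_self {P : Set L} (hP : M.IsSubgroup P) {a : L} (ha : a ∈ P) :
    M.setConj P a = P := by
  have hPw : ∀ u : List L, (∀ z ∈ u, z ∈ P) → u ∈ M.D := fun u hu => hP.2 u hu
  have hPpi : ∀ u : List L, (∀ z ∈ u, z ∈ P) → M.Pi u ∈ P :=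
    fun u hu => hP.1.2.2 u hu (hPw u hu)
  have hia : M.inv a ∈ P := hP.1.2.1 a ha
  ext y
  constructor
  · rintro ⟨x, hx, rfl⟩
    exact hPpi _ (Scons hia (Scons hx (Scons ha Snil)))
  · intro hy
    have hmem : [a, y, M.inv a] ∈ M.D := hPw _ (Scons ha (Scons hy (Scons hia Snil)))
    have hconjmem : M.conj y (M.inv a) ∈ P := by
      have he : M.conj y (M.inv a) = M.Pi [a, y, M.inv a] := by rw [conj, M.inv_inv]
      rw [he]
      exact hPpi _ (Scons ha (Scons hy (Scons hia Snil)))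
    exact ⟨M.conj y (M.inv a), hconjmem, (conj_invconj hmem).symm⟩

lemma mem_setConj {X : Set L} {a y : L} :
    y ∈ M.setConj X a ↔ ∃ x ∈ X, y = M.conj x a := Iff.rfl

include hS

lemma setConj_subset_S {X : Set L} (hX : X ⊆ S) {a : L} (ha : a ∈ S) :
    M.setConj X a ⊆ S := by
  rintro y ⟨x, hx, rfl⟩
  exact S_conj_mem hS (hX hx) ha

lemma setConj_setConj {X : Set L} (hX : X ⊆ S) {a b : L} (ha : a ∈ S) (hb : b ∈ S) :
    M.setConj (M.setConj X a) b = M.setConj X (M.Pi [a, b]) := by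
  ext y
  constructor
  · rintro ⟨z, ⟨x, hx, rfl⟩, rfl⟩
    exact ⟨x, hx, conj_comp hS (hX hx) ha hb⟩
  · rintro ⟨x, hx, rfl⟩
    exact ⟨M.conj x a, ⟨x, hx, rfl⟩, (conj_comp hS (hX hx) ha hb).symm⟩

omit hS

lemma setConj_one {X : Set L} : M.setConj X M.one = X := by
  ext y
  constructor
  · rintro ⟨x, hx, rfl⟩
    rwa [conj_one_right]
  · intro hy
    exact ⟨y, hy, (conj_one_right y).symm⟩

include hS

lemma setConj_inv_cancel {X : Set L} (hX : X ⊆ S) {a : L} (ha : a ∈ S) :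
    M.setConj (M.setConj X a) (M.inv a) = X := by
  rw [setConj_setConj hS hX ha (S_inv_mem hS ha), pi_pair_inv, setConj_one]

lemma setConj_inv_cancel' {X : Set L} (hX : X ⊆ S) {a : L} (ha : a ∈ S) :
    M.setConj (M.setConj X (M.inv a)) a = X := by
  rw [setConj_setConj hS hX (S_inv_mem hS ha) ha, pi_inv_pair, setConj_one]

omit hS

lemma one_mem_of_closed {T : Set L} (hne : T.Nonempty)
    (hinv : ∀ x ∈ T, M.inv x ∈ T)
    (hmul : ∀ x ∈ T, ∀ y ∈ T, M.Pi [x, y] ∈ T) : M.one ∈ T := by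
  obtain ⟨x, hx⟩ := hne
  have := hmul x hx (M.inv x) (hinv x hx)
  rwa [pi_pair_inv] at this

include hS

lemma isSubgroup_of {T : Set L} (hTS : T ⊆ S) (hne : T.Nonempty)
    (hinv : ∀ x ∈ T, M.inv x ∈ T)
    (hmul : ∀ x ∈ T, ∀ y ∈ T, M.Pi [x, y] ∈ T) : M.IsSubgroup T := by
  have hone : M.one ∈ T := one_mem_of_closed hne hinv hmul
  have hword : ∀ w : List L, (∀ x ∈ w, x ∈ T) → w ∈ M.D := by
    intro w hw
    exact S_word_mem hS (fun x hx => hTS (hw x hx))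
  refine ⟨⟨hne, hinv, ?_⟩, hword⟩
  intro w hw _
  clear hS
  induction w with
  | nil => exact hone
  | cons a v ih =>
    have ha : a ∈ T := hw a List.mem_cons_self
    have hv : ∀ x ∈ v, x ∈ T := fun x hx => hw x (List.mem_cons_of_mem a hx)
    have h1 : a :: v ∈ M.D := hword _ hw
    have h2 : v ∈ M.D := hword _ hv
    rw [pi_cons h1 h2]
    exact hmul a ha (M.Pi v) (ih hv h2)

/-- conjugation is multiplicative inside `S`. -/
lemma conj_mul_S {x y a : L} (hx : x ∈ S) (hy : y ∈ S) (ha : a ∈ S) :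
    M.conj (M.Pi [x, y]) a = M.Pi [M.conj x a, M.conj y a] := by
  have hia := S_inv_mem hS ha
  have hW : [M.inv a, x, a, M.inv a, y, a] ∈ M.D :=
    S_word_mem hS (Scons hia (Scons hx (Scons ha (Scons hia (Scons hy (Scons ha Snil))))))
  have hcx := S_conj_mem hS hx ha
  have hcy := S_conj_mem hS hy ha
  -- contract the two triples
  have m1 : [M.conj x a, M.inv a, y, a] ∈ M.D := by
    have := M.mem_assoc [] [M.inv a, x, a] [M.inv a, y, a] (by simpa using hW)
    simpa [conj] using this
  have e1 : M.Pi [M.inv a, x, a, M.inv a, y, a] = M.Pi [M.conj x a, M.inv a, y, a] := by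
    have := M.Pi_assoc [] [M.inv a, x, a] [M.inv a, y, a] (by simpa using hW)
    simpa [conj] using this
  have e2 : M.Pi [M.conj x a, M.inv a, y, a] = M.Pi [M.conj x a, M.conj y a] := by
    have := M.Pi_assoc [M.conj x a] [M.inv a, y, a] [] (by simpa using m1)
    simpa [conj] using this
  -- contract the middle pair
  have e3 : M.Pi [M.inv a, x, a, M.inv a, y, a] = M.Pi [M.inv a, x, M.one, y, a] := by
    have := M.Pi_assoc [M.inv a, x] [a, M.inv a] [y, a] (by simpa using hW)
    simp only [List.cons_append, List.nil_append, List.append_nil] at this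
    rwa [pi_pair_inv] at this
  have m4 : [M.inv a, x, y, a] ∈ M.D :=
    S_word_mem hS (Scons hia (Scons hx (Scons hy (Scons ha Snil))))
  have e4 : M.Pi [M.inv a, x, y, a] = M.Pi [M.inv a, x, M.one, y, a] := by
    have := M.Pi_assoc [M.inv a, x] [] [y, a] (by simpa using m4)
    simpa [one] using this
  have e5 : M.Pi [M.inv a, x, y, a] = M.Pi [M.inv a, M.Pi [x, y], a] := by
    have := M.Pi_assoc [M.inv a] [x, y] [a] (by simpa using m4)
    simpa using this
  rw [conj, ← e5, e4, ← e3, e1, e2]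

lemma setConj_isSubgroup {X : Set L} (hX : M.IsSubgroup X) (hXS : X ⊆ S) {a : L}
    (ha : a ∈ S) : M.IsSubgroup (M.setConj X a) := by
  refine isSubgroup_of hS (setConj_subset_S hS hXS ha) ?_ ?_ ?_
  · obtain ⟨x, hx⟩ := hX.1.1
    exact ⟨M.conj x a, x, hx, rfl⟩
  · rintro y ⟨x, hx, rfl⟩
    refine ⟨M.inv x, hX.1.2.1 x hx, ?_⟩
    exact (conj_inv_eq (S_word_mem hS
      (Scons (S_inv_mem hS ha) (Scons (hXS hx) (Scons ha Snil))))).symm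
  · rintro y ⟨x, hx, rfl⟩ z ⟨x', hx', rfl⟩
    refine ⟨M.Pi [x, x'], ?_, ?_⟩
    · exact hX.1.2.2 [x, x'] (Scons hx (Scons hx' Snil)) (hX.2 _ (Scons hx (Scons hx' Snil)))
    · exact (conj_mul_S hS (hXS hx) (hXS hx') ha).symm

end SLemmas


/-- `P` is a "chain subgroup" for `g`: `P ∈ Δ`, `P ⊆ D(g)` and `P^g ∈ Δ`. -/
def IsChainSub (M : PartialGroupOn L) (Δ : Set (Set L)) (g : L) (P : Set L) : Prop :=
  P ∈ Δ ∧ M.setConjDef P g ∧ M.setConj P g ∈ Δ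

section Locality

variable {S : Set L} {Δ : Set (Set L)}
variable (hS : M.IsSubgroup S) (hSD : S ∈ Δ) (hsub : ∀ X ∈ Δ, X ⊆ S)
  (hobj : M.Objective Δ)

lemma viaChain_nil {X : Set L} : M.viaChain Δ [] X ↔ X ∈ Δ := Iff.rfl

lemma viaChain_cons {g : L} {w : List L} {X : Set L} :
    M.viaChain Δ (g :: w) X ↔
      X ∈ Δ ∧ M.setConjDef X g ∧ M.viaChain Δ w (M.setConj X g) := Iff.rfl

include hobj in
lemma memD_of_chain {w : List L} {X : Set L} (h : M.viaChain Δ w X) : w ∈ M.D := by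
  rw [hobj.2.1]; exact ⟨X, h⟩

include hS in
lemma setConjDef_of_S {X : Set L} {a : L} (hX : X ⊆ S) (ha : a ∈ S) :
    M.setConjDef X a := fun x hx =>
  S_word_mem hS (Scons (S_inv_mem hS ha) (Scons (hX hx) (Scons ha Snil)))

include hS hSD hsub hobj in
lemma delta_interval {X Z : Set L} (hX : X ∈ Δ) (hZ : M.IsSubgroup Z)
    (hXZ : X ⊆ Z) (hZS : Z ⊆ S) : Z ∈ Δ := by
  have hXS : X ⊆ S := hsub X hX
  have hdef : M.setConjDef X M.one := by
    intro x hx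
    rw [inv_one]
    exact S_word_mem hS (Scons (S_one_mem hS) (Scons (hXS hx) (Scons (S_one_mem hS) Snil)))
  exact hobj.2.2 X hX S hSD M.one hdef
    (by rw [setConj_one]; exact hobj.1 X hX)
    (by rw [setConj_one]; exact hXS) Z hZ
    (by rw [setConj_one]; exact hXZ) hZS

include hS hSD hsub hobj in
lemma delta_conjS {X : Set L} {a : L} (hX : X ∈ Δ) (ha : a ∈ S) :
    M.setConj X a ∈ Δ := by
  have hXS := hsub X hX
  have hXsub := hobj.1 X hX
  have hdef : M.setConjDef X a := setConjDef_of_S hS hXS ha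
  have hsubg := setConj_isSubgroup hS hXsub hXS ha
  exact hobj.2.2 X hX S hSD a hdef hsubg (setConj_subset_S hS hXS ha) _ hsubg
    subset_rfl (setConj_subset_S hS hXS ha)

include hobj in
lemma chainSub_exists (g : L) : ∃ P, IsChainSub M Δ g P := by
  have hg : [g] ∈ M.D := M.mem_single g
  rw [hobj.2.1] at hg
  obtain ⟨X, hX⟩ := hg
  rw [viaChain_cons] at hX
  exact ⟨X, hX.1, hX.2.1, hX.2.2⟩

lemma Qside {g : L} {P : Set L} (hP : IsChainSub M Δ g P) :
    M.setConjDef (M.setConj P g) (M.inv g) ∧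
      M.setConj (M.setConj P g) (M.inv g) = P := by
  constructor
  · rintro q ⟨a, ha, rfl⟩
    have := conj_push_mem (hP.2.1 a ha)
    rwa [show [M.inv (M.inv g), M.conj a g, M.inv g]
      = [g, M.conj a g, M.inv g] from by rw [M.inv_inv]]
  · ext y
    constructor
    · rintro ⟨q, ⟨a, ha, rfl⟩, rfl⟩
      rw [conj_conj_inv_eq (hP.2.1 a ha)]; exact ha
    · intro hy
      exact ⟨M.conj y g, ⟨y, hy, rfl⟩, (conj_conj_inv_eq (hP.2.1 y hy)).symm⟩

lemma mem_Sg_iff {g x : L} :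
    x ∈ M.Sg S g ↔ x ∈ S ∧ [M.inv g, x, g] ∈ M.D ∧ M.conj x g ∈ S := Iff.rfl

end Locality


section Core

variable {S : Set L} {Δ : Set (Set L)}
variable (hS : M.IsSubgroup S) (hSD : S ∈ Δ) (hsub : ∀ X ∈ Δ, X ⊆ S)
  (hobj : M.Objective Δ)

include hS hSD hsub hobj in
/-- The key lemma: chain subgroups for `g` are stable under conjugation by
elements of `S_g`, and the corresponding conjugation identity holds. -/
lemma core_step {g o : L} {P : Set L} (hP : IsChainSub M Δ g P) (ho : o ∈ M.Sg S g) :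
    IsChainSub M Δ g (M.setConj P o) ∧
    (∀ a ∈ P, [M.inv g, M.conj a o, g] ∈ M.D ∧
      M.conj (M.conj a o) g = M.conj (M.conj a g) (M.conj o g)) := by
  obtain ⟨hoS, hg3, ho'S⟩ := ho
  have hPΔ := hP.1
  have hQΔ : M.setConj P g ∈ Δ := hP.2.2
  have hPS : P ⊆ S := hsub P hPΔ
  have hQS : M.setConj P g ⊆ S := hsub _ hQΔ
  have hPsub : M.IsSubgroup P := hobj.1 P hPΔ
  have hioS : M.inv o ∈ S := S_inv_mem hS hoS
  -- (B) u = Π[g, o']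
  have hog : [o, g] ∈ M.D := xg_pair_mem hg3
  have hBgo' : [g, M.conj o g] ∈ M.D ∧ M.Pi [g, M.conj o g] = M.Pi [o, g] := pi_g_conj hg3
  -- (D) inverse identities
  have hinvu1 : M.Pi [M.inv g, M.inv o] = M.inv (M.Pi [o, g]) := (pi_swap_inv hog).2
  have hinvu2 : M.Pi [M.inv (M.conj o g), M.inv g] = M.inv (M.Pi [o, g]) := by
    rw [(pi_swap_inv hBgo'.1).2, hBgo'.2]
  -- (E) Π[u⁻¹, o] = g⁻¹
  have t6 : [M.inv g, M.inv o, g, M.inv g, o, g] ∈ M.D := by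
    have := wordInv_append_self_mem hg3
    simpa [wordInv, M.inv_inv] using this
  have me1 : [M.inv g, M.inv o, M.one, o, g] ∈ M.D := by
    have := M.mem_assoc [M.inv g, M.inv o] [g, M.inv g] [o, g] (by simpa using t6)
    simp only [List.cons_append, List.nil_append] at this
    rwa [pi_pair_inv] at this
  have m_oneo : [M.one, o] ∈ M.D := by
    have h1 : [M.one, o, g] ∈ M.D :=
      M.mem_append_right [M.inv g, M.inv o] _ (by simpa using me1)
    exact M.mem_append_left [M.one, o] [g] (by simpa using h1)
  have me2 : [M.inv g, M.inv o, o, g] ∈ M.D := by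
    have := M.mem_assoc [M.inv g, M.inv o] [M.one, o] [g] (by simpa using me1)
    simp only [List.cons_append, List.nil_append] at this
    rwa [pi_one_pair] at this
  have mE : [M.inv g, M.inv o, o] ∈ M.D :=
    M.mem_append_left [M.inv g, M.inv o, o] [g] (by simpa using me2)
  have e_iuo : M.Pi [M.inv (M.Pi [o, g]), o] = M.inv g := by
    have eE1 := M.Pi_assoc [] [M.inv g, M.inv o] [o] (by simpa using mE)
    have eE2 := M.Pi_assoc [M.inv g] [M.inv o, o] [] (by simpa using mE)
    simp only [List.cons_append, List.nil_append, List.append_nil] at eE1 eE2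
    rw [pi_inv_pair, pi_pair_one] at eE2
    rw [hinvu1] at eE1
    rw [← eE1, eE2]
  -- (F) Π[o⁻¹, u] = g
  have mF0 : [M.inv o, g, M.inv g, o, g] ∈ M.D :=
    M.mem_append_right [M.inv g] _ (by simpa using t6)
  have m_gigo : [g, M.inv g, o] ∈ M.D := by
    have h1 : [g, M.inv g, o, g] ∈ M.D :=
      M.mem_append_right [M.inv o] _ (by simpa using mF0)
    exact M.mem_append_left [g, M.inv g, o] [g] (by simpa using h1)
  have e_gigo : M.Pi [g, M.inv g, o] = o := by
    have := M.Pi_assoc [] [g, M.inv g] [o] (by simpa using m_gigo)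
    simp only [List.cons_append, List.nil_append] at this
    rw [pi_pair_inv, pi_one_pair] at this
    exact this
  have mF : [M.inv o, o, g] ∈ M.D := by
    have := M.mem_assoc [M.inv o] [g, M.inv g, o] [g] (by simpa using mF0)
    simp only [List.cons_append, List.nil_append] at this
    rwa [e_gigo] at this
  have e_iou : M.Pi [M.inv o, M.Pi [o, g]] = g := by
    have eF1 := M.Pi_assoc [M.inv o] [o, g] [] (by simpa using mF)
    have eF2 := M.Pi_assoc [] [M.inv o, o] [g] (by simpa using mF)
    simp only [List.cons_append, List.nil_append, List.append_nil] at eF1 eF2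
    rw [pi_inv_pair, pi_one_pair] at eF2
    rw [← eF1, eF2]
  -- (G) the v₆ package
  have hX0Δ : M.setConj (M.setConj P g) (M.conj o g) ∈ Δ :=
    delta_conjS hS hSD hsub hobj hQΔ ho'S
  have hQside := Qside (M := M) hP
  have hGpack : ∀ a ∈ P, [M.inv (M.Pi [o, g]), a, M.Pi [o, g]] ∈ M.D ∧
      M.conj a (M.Pi [o, g]) = M.conj (M.conj a g) (M.conj o g) := by
    intro a ha
    have haS := hPS ha
    have hv6 : [M.inv (M.conj o g), M.inv g, a, g, M.conj o g] ∈ M.D := by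
      apply memD_of_chain hobj (X := M.setConj (M.setConj P g) (M.conj o g))
      rw [viaChain_cons]
      refine ⟨hX0Δ, setConjDef_of_S hS (setConj_subset_S hS hQS ho'S)
        (S_inv_mem hS ho'S), ?_⟩
      rw [setConj_inv_cancel hS hQS ho'S]
      rw [viaChain_cons]
      refine ⟨hQΔ, hQside.1, ?_⟩
      rw [hQside.2]
      rw [viaChain_cons]
      refine ⟨hPΔ, setConjDef_of_S hS hPS haS, ?_⟩
      rw [setConj_self hPsub ha]
      rw [viaChain_cons]
      refine ⟨hPΔ, hP.2.1, ?_⟩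
      rw [viaChain_cons]
      refine ⟨hQΔ, setConjDef_of_S hS hQS ho'S, ?_⟩
      rw [viaChain_nil]
      exact hX0Δ
    have mG1 : [M.Pi [M.inv (M.conj o g), M.inv g], a, g, M.conj o g] ∈ M.D := by
      have := M.mem_assoc [] [M.inv (M.conj o g), M.inv g] [a, g, M.conj o g]
        (by simpa using hv6)
      simpa using this
    have eG1 : M.Pi [M.inv (M.conj o g), M.inv g, a, g, M.conj o g]
        = M.Pi [M.Pi [M.inv (M.conj o g), M.inv g], a, g, M.conj o g] := by
      have := M.Pi_assoc [] [M.inv (M.conj o g), M.inv g] [a, g, M.conj o g]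
        (by simpa using hv6)
      simpa using this
    rw [hinvu2] at mG1 eG1
    have mG2 : [M.inv (M.Pi [o, g]), a, M.Pi [g, M.conj o g]] ∈ M.D := by
      have := M.mem_assoc [M.inv (M.Pi [o, g]), a] [g, M.conj o g] [] (by simpa using mG1)
      simpa using this
    have eG2 : M.Pi [M.inv (M.Pi [o, g]), a, g, M.conj o g]
        = M.Pi [M.inv (M.Pi [o, g]), a, M.Pi [g, M.conj o g]] := by
      have := M.Pi_assoc [M.inv (M.Pi [o, g]), a] [g, M.conj o g] [] (by simpa using mG1)
      simpa using this
    rw [hBgo'.2] at mG2 eG2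
    have eG3 : M.Pi [M.inv (M.conj o g), M.inv g, a, g, M.conj o g]
        = M.Pi [M.inv (M.conj o g), M.conj a g, M.conj o g] := by
      have := M.Pi_assoc [M.inv (M.conj o g)] [M.inv g, a, g] [M.conj o g]
        (by simpa using hv6)
      simpa [conj] using this
    refine ⟨mG2, ?_⟩
    have hc : M.conj a (M.Pi [o, g])
        = M.Pi [M.inv (M.Pi [o, g]), a, M.Pi [o, g]] := rfl
    rw [hc, ← eG2, ← eG1, eG3]
    rfl
  -- (H) the W package
  have hsetu : M.setConj P (M.Pi [o, g]) = M.setConj (M.setConj P g) (M.conj o g) := by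
    ext y
    constructor
    · rintro ⟨a, ha, rfl⟩
      exact ⟨M.conj a g, ⟨a, ha, rfl⟩, (hGpack a ha).2⟩
    · rintro ⟨q, ⟨a, ha, rfl⟩, rfl⟩
      exact ⟨a, ha, ((hGpack a ha).2).symm⟩
  have hHpack : ∀ a ∈ P, [M.inv g, M.conj a o, g] ∈ M.D ∧
      M.conj (M.conj a o) g = M.conj (M.conj a g) (M.conj o g) := by
    intro a ha
    have haS := hPS ha
    have hsS : M.conj a o ∈ S := S_conj_mem hS haS hoS
    have hPoS : M.setConj P o ⊆ S := setConj_subset_S hS hPS hoS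
    have hPoΔ : M.setConj P o ∈ Δ := delta_conjS hS hSD hsub hobj hPΔ hoS
    have hDefX0 : M.setConjDef (M.setConj (M.setConj P g) (M.conj o g))
        (M.inv (M.Pi [o, g])) := by
      rintro e ⟨q, ⟨b, hb, rfl⟩, rfl⟩
      have he : M.conj (M.conj b g) (M.conj o g) = M.conj b (M.Pi [o, g]) :=
        ((hGpack b hb).2).symm
      rw [he]
      exact conj_invg_memD (hGpack b hb).1
    have hX0inv : M.setConj (M.setConj (M.setConj P g) (M.conj o g))
        (M.inv (M.Pi [o, g])) = P := by
      rw [← hsetu]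
      ext y
      constructor
      · rintro ⟨e, ⟨b, hb, rfl⟩, rfl⟩
        rw [conj_conj_inv_eq (hGpack b hb).1]; exact hb
      · intro hy
        exact ⟨M.conj y (M.Pi [o, g]), ⟨y, hy, rfl⟩,
          (conj_conj_inv_eq (hGpack y hy).1).symm⟩
    have hW : [M.inv (M.Pi [o, g]), o, M.conj a o, M.inv o, M.Pi [o, g]] ∈ M.D := by
      apply memD_of_chain hobj (X := M.setConj (M.setConj P g) (M.conj o g))
      rw [viaChain_cons]
      refine ⟨hX0Δ, hDefX0, ?_⟩
      rw [hX0inv, viaChain_cons]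
      refine ⟨hPΔ, setConjDef_of_S hS hPS hoS, ?_⟩
      rw [viaChain_cons]
      refine ⟨hPoΔ, setConjDef_of_S hS hPoS hsS, ?_⟩
      have hfix : M.setConj (M.setConj P o) (M.conj a o) = M.setConj P o := by
        rw [setConj_setConj hS hPS hoS hsS]
        have hvv : M.Pi [o, M.conj a o] = M.Pi [a, o] :=
          (pi_g_conj (setConjDef_of_S hS hPS hoS a ha)).2
        rw [hvv, ← setConj_setConj hS hPS haS hoS, setConj_self hPsub ha]
      rw [hfix, viaChain_cons]
      refine ⟨hPoΔ, setConjDef_of_S hS hPoS hioS, ?_⟩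
      rw [setConj_inv_cancel hS hPS hoS, viaChain_cons]
      refine ⟨hPΔ, ?_, ?_⟩
      · intro b hb; exact (hGpack b hb).1
      · rw [viaChain_nil, hsetu]; exact hX0Δ
    have mH1 : [M.Pi [M.inv (M.Pi [o, g]), o], M.conj a o, M.inv o, M.Pi [o, g]] ∈ M.D := by
      have := M.mem_assoc [] [M.inv (M.Pi [o, g]), o] [M.conj a o, M.inv o, M.Pi [o, g]]
        (by simpa using hW)
      simpa using this
    have eH1 : M.Pi [M.inv (M.Pi [o, g]), o, M.conj a o, M.inv o, M.Pi [o, g]]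
        = M.Pi [M.Pi [M.inv (M.Pi [o, g]), o], M.conj a o, M.inv o, M.Pi [o, g]] := by
      have := M.Pi_assoc [] [M.inv (M.Pi [o, g]), o] [M.conj a o, M.inv o, M.Pi [o, g]]
        (by simpa using hW)
      simpa using this
    rw [e_iuo] at mH1 eH1
    have mH2 : [M.inv g, M.conj a o, M.Pi [M.inv o, M.Pi [o, g]]] ∈ M.D := by
      have := M.mem_assoc [M.inv g, M.conj a o] [M.inv o, M.Pi [o, g]] []
        (by simpa using mH1)
      simpa using this
    have eH2 : M.Pi [M.inv g, M.conj a o, M.inv o, M.Pi [o, g]]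
        = M.Pi [M.inv g, M.conj a o, M.Pi [M.inv o, M.Pi [o, g]]] := by
      have := M.Pi_assoc [M.inv g, M.conj a o] [M.inv o, M.Pi [o, g]] []
        (by simpa using mH1)
      simpa using this
    rw [e_iou] at mH2 eH2
    refine ⟨mH2, ?_⟩
    have eH3 : M.Pi [M.inv (M.Pi [o, g]), o, M.conj a o, M.inv o, M.Pi [o, g]]
        = M.Pi [M.inv (M.Pi [o, g]), a, M.Pi [o, g]] := by
      have := M.Pi_assoc [M.inv (M.Pi [o, g])] [o, M.conj a o, M.inv o] [M.Pi [o, g]]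
        (by simpa using hW)
      have hval : M.Pi [o, M.conj a o, M.inv o] = a :=
        pi_conj_push (setConjDef_of_S hS hPS hoS a ha)
      rw [hval] at this
      simpa using this
    have hc : M.conj (M.conj a o) g = M.Pi [M.inv g, M.conj a o, g] := rfl
    rw [hc, ← eH2, ← eH1, eH3]
    exact (hGpack a ha).2
  refine ⟨⟨delta_conjS hS hSD hsub hobj hPΔ hoS, ?_, ?_⟩, hHpack⟩
  · rintro s ⟨a, ha, rfl⟩
    exact (hHpack a ha).1
  · have hEq : M.setConj (M.setConj P o) g
        = M.setConj (M.setConj P g) (M.conj o g) := by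
      ext y
      constructor
      · rintro ⟨s, ⟨a, ha, rfl⟩, rfl⟩
        exact ⟨M.conj a g, ⟨a, ha, rfl⟩, (hHpack a ha).2⟩
      · rintro ⟨q, ⟨a, ha, rfl⟩, rfl⟩
        exact ⟨M.conj a o, ⟨a, ha, rfl⟩, ((hHpack a ha).2).symm⟩
    rw [hEq]
    exact hX0Δ

end Core


section SgClosure

variable {S : Set L} {Δ : Set (Set L)}
variable (hS : M.IsSubgroup S) (hSD : S ∈ Δ) (hsub : ∀ X ∈ Δ, X ⊆ S)
  (hobj : M.Objective Δ)

include hS hSD hsub hobj in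
lemma Sg_mul {g x y : L} (hx : x ∈ M.Sg S g) (hy : y ∈ M.Sg S g) :
    M.Pi [x, y] ∈ M.Sg S g ∧
      M.conj (M.Pi [x, y]) g = M.Pi [M.conj x g, M.conj y g] := by
  obtain ⟨P, hP⟩ := chainSub_exists hobj g
  have h1 := core_step hS hSD hsub hobj hP hx
  have h2 := core_step hS hSD hsub hobj h1.1 hy
  obtain ⟨hxS, hxg, hx'S⟩ := hx
  obtain ⟨hyS, hyg, hy'S⟩ := hy
  have hPS : P ⊆ S := hsub P hP.1
  have hQΔ := hP.2.2
  have hQside := Qside (M := M) hP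
  have hPxS : M.setConj P x ⊆ S := setConj_subset_S hS hPS hxS
  have h4 : [M.inv g, x, y, g] ∈ M.D := by
    apply memD_of_chain hobj (X := M.setConj P g)
    rw [viaChain_cons]
    refine ⟨hQΔ, hQside.1, ?_⟩
    rw [hQside.2, viaChain_cons]
    refine ⟨hP.1, setConjDef_of_S hS hPS hxS, ?_⟩
    rw [viaChain_cons]
    refine ⟨delta_conjS hS hSD hsub hobj hP.1 hxS,
      setConjDef_of_S hS hPxS hyS, ?_⟩
    rw [viaChain_cons]
    refine ⟨h2.1.1, h2.1.2.1, ?_⟩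
    rw [viaChain_nil]
    exact h2.1.2.2
  have h6 : [M.inv g, x, g, M.inv g, y, g] ∈ M.D := by
    apply memD_of_chain hobj (X := M.setConj P g)
    rw [viaChain_cons]
    refine ⟨hQΔ, hQside.1, ?_⟩
    rw [hQside.2, viaChain_cons]
    refine ⟨hP.1, setConjDef_of_S hS hPS hxS, ?_⟩
    rw [viaChain_cons]
    refine ⟨h1.1.1, h1.1.2.1, ?_⟩
    rw [viaChain_cons]
    have hQx := Qside (M := M) h1.1
    refine ⟨h1.1.2.2, hQx.1, ?_⟩
    rw [hQx.2, viaChain_cons]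
    refine ⟨h1.1.1, setConjDef_of_S hS hPxS hyS, ?_⟩
    rw [viaChain_cons]
    refine ⟨h2.1.1, h2.1.2.1, ?_⟩
    rw [viaChain_nil]
    exact h2.1.2.2
  -- memberships and values via contractions
  have m4c : [M.inv g, M.Pi [x, y], g] ∈ M.D := by
    have := M.mem_assoc [M.inv g] [x, y] [g] (by simpa using h4)
    simpa using this
  have e4c : M.Pi [M.inv g, x, y, g] = M.Pi [M.inv g, M.Pi [x, y], g] := by
    have := M.Pi_assoc [M.inv g] [x, y] [g] (by simpa using h4)
    simpa using this
  -- 6-word contractions: two triples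
  have m61 : [M.conj x g, M.inv g, y, g] ∈ M.D := by
    have := M.mem_assoc [] [M.inv g, x, g] [M.inv g, y, g] (by simpa using h6)
    simpa [conj] using this
  have e61 : M.Pi [M.inv g, x, g, M.inv g, y, g]
      = M.Pi [M.conj x g, M.inv g, y, g] := by
    have := M.Pi_assoc [] [M.inv g, x, g] [M.inv g, y, g] (by simpa using h6)
    simpa [conj] using this
  have e62 : M.Pi [M.conj x g, M.inv g, y, g] = M.Pi [M.conj x g, M.conj y g] := by
    have := M.Pi_assoc [M.conj x g] [M.inv g, y, g] [] (by simpa using m61)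
    simpa [conj] using this
  -- 6-word middle contraction
  have e63 : M.Pi [M.inv g, x, g, M.inv g, y, g] = M.Pi [M.inv g, x, M.one, y, g] := by
    have := M.Pi_assoc [M.inv g, x] [g, M.inv g] [y, g] (by simpa using h6)
    simp only [List.cons_append, List.nil_append] at this
    rwa [pi_pair_inv] at this
  have e64 : M.Pi [M.inv g, x, y, g] = M.Pi [M.inv g, x, M.one, y, g] := by
    have := M.Pi_assoc [M.inv g, x] [] [y, g] (by simpa using h4)
    simpa [one] using this
  have key : M.conj (M.Pi [x, y]) g = M.Pi [M.conj x g, M.conj y g] := by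
    have hc : M.conj (M.Pi [x, y]) g = M.Pi [M.inv g, M.Pi [x, y], g] := rfl
    rw [hc, ← e4c, e64, ← e63, e61, e62]
  refine ⟨⟨S_pair_mem hS hxS hyS, m4c, ?_⟩, key⟩
  rw [key]
  exact S_pair_mem hS hx'S hy'S

include hS in
lemma Sg_inv {g x : L} (hx : x ∈ M.Sg S g) :
    M.inv x ∈ M.Sg S g ∧ M.conj (M.inv x) g = M.inv (M.conj x g) := by
  obtain ⟨hxS, hxg, hx'S⟩ := hx
  have hm := conj_inv_mem hxg
  have he := conj_inv_eq hxg
  exact ⟨⟨S_inv_mem hS hxS, hm, by rw [he]; exact S_inv_mem hS hx'S⟩, he⟩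

include hS in
lemma Sg_one {g : L} : M.one ∈ M.Sg S g ∧ M.conj M.one g = M.one := by
  have hm : [M.inv g, M.one, g] ∈ M.D := by
    have := M.mem_assoc [M.inv g] [] [g] (by simpa using inv_pair_mem g)
    simpa [one] using this
  have he : M.conj M.one g = M.one := by
    have := M.Pi_assoc [M.inv g] [] [g] (by simpa using inv_pair_mem g)
    simp only [List.cons_append, List.nil_append, List.append_nil] at this
    have hc : M.conj M.one g = M.Pi [M.inv g, M.Pi [], g] := rfl
    rw [hc, ← this, pi_inv_pair]
  exact ⟨⟨S_one_mem hS, hm, by rw [he]; exact S_one_mem hS⟩, he⟩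

end SgClosure


section Kthy

variable {S : Set L} {Δ : Set (Set L)}
variable (hS : M.IsSubgroup S) (hSD : S ∈ Δ) (hsub : ∀ X ∈ Δ, X ⊆ S)
  (hobj : M.Objective Δ)

lemma mem_Sw_cons {g : L} {w : List L} {x : L} :
    x ∈ M.Sw S (g :: w) ↔
      x ∈ S ∧ [M.inv g, x, g] ∈ M.D ∧ M.conj x g ∈ M.Sw S w := Iff.rfl

lemma K_subset_S : (⋂ w : List L, M.Sw S w) ⊆ S := fun x hx =>
  Set.mem_iInter.mp hx []

lemma K_mem_Sg {x : L} (hx : x ∈ ⋂ w : List L, M.Sw S w) (g : L) : x ∈ M.Sg S g := by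
  have h := Set.mem_iInter.mp hx [g]
  exact ⟨h.1, h.2.1, h.2.2⟩

lemma K_conj_mem {x : L} (hx : x ∈ ⋂ w : List L, M.Sw S w) (g : L) :
    M.conj x g ∈ ⋂ w : List L, M.Sw S w := by
  rw [Set.mem_iInter]
  intro w
  exact (Set.mem_iInter.mp hx (g :: w)).2.2

include hS in
lemma K_one : M.one ∈ ⋂ w : List L, M.Sw S w := by
  rw [Set.mem_iInter]
  intro w
  induction w with
  | nil => exact S_one_mem hS
  | cons g w ih =>
    exact ⟨S_one_mem hS, (Sg_one (g := g) hS).1.2.1, by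
      rw [(Sg_one (g := g) hS).2]; exact ih⟩

include hS in
lemma Sw_inv : ∀ (w : List L) (x : L), x ∈ M.Sw S w → M.inv x ∈ M.Sw S w := by
  intro w
  induction w with
  | nil => intro x hx; exact S_inv_mem hS hx
  | cons g w ih =>
    intro x hx
    obtain ⟨hxS, hxg, hxw⟩ := hx
    refine ⟨S_inv_mem hS hxS, conj_inv_mem hxg, ?_⟩
    rw [conj_inv_eq hxg]
    exact ih _ hxw

include hS in
lemma K_inv {x : L} (hx : x ∈ ⋂ w : List L, M.Sw S w) :
    M.inv x ∈ ⋂ w : List L, M.Sw S w := by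
  rw [Set.mem_iInter]
  intro w
  exact Sw_inv hS w x (Set.mem_iInter.mp hx w)

include hS hSD hsub hobj in
lemma K_mul {x y : L} (hx : x ∈ ⋂ w : List L, M.Sw S w)
    (hy : y ∈ ⋂ w : List L, M.Sw S w) :
    M.Pi [x, y] ∈ ⋂ w : List L, M.Sw S w := by
  rw [Set.mem_iInter]
  suffices h : ∀ w : List L, ∀ x y : L, x ∈ (⋂ w : List L, M.Sw S w) →
      y ∈ (⋂ w : List L, M.Sw S w) → M.Pi [x, y] ∈ M.Sw S w by
    intro w; exact h w x y hx hy
  intro w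
  induction w with
  | nil =>
    intro x y hx hy
    exact S_pair_mem hS (K_subset_S hx) (K_subset_S hy)
  | cons g w ih =>
    intro x y hx hy
    have hxg := K_mem_Sg hx g
    have hyg := K_mem_Sg hy g
    have hmul := Sg_mul hS hSD hsub hobj hxg hyg
    refine ⟨S_pair_mem hS hxg.1 hyg.1, hmul.1.2.1, ?_⟩
    rw [hmul.2]
    exact ih (M.conj x g) (M.conj y g) (K_conj_mem hx g) (K_conj_mem hy g)

include hS hSD hsub hobj in
lemma K_isSubgroup : M.IsSubgroup (⋂ w : List L, M.Sw S w) :=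
  isSubgroup_of hS (K_subset_S) ⟨M.one, K_one hS⟩
    (fun _ hx => K_inv hS hx)
    (fun _ hx _ hy => K_mul hS hSD hsub hobj hx hy)

include hS hSD hsub hobj in
lemma Sg_isSubgroup (g : L) : M.IsSubgroup (M.Sg S g) :=
  isSubgroup_of hS (fun _ hx => hx.1) ⟨M.one, (Sg_one hS).1⟩
    (fun _ hx => (Sg_inv hS hx).1)
    (fun _ hx _ hy => (Sg_mul hS hSD hsub hobj hx hy).1)

include hS hSD hsub hobj in
lemma Sg_image_isSubgroup (g : L) : M.IsSubgroup (M.setConj (M.Sg S g) g) := by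
  refine isSubgroup_of hS ?_ ?_ ?_ ?_
  · rintro y ⟨x, hx, rfl⟩; exact hx.2.2
  · exact ⟨M.conj M.one g, M.one, (Sg_one hS).1, rfl⟩
  · rintro y ⟨x, hx, rfl⟩
    exact ⟨M.inv x, (Sg_inv hS hx).1, ((Sg_inv hS hx).2).symm⟩
  · rintro y ⟨x, hx, rfl⟩ z ⟨x', hx', rfl⟩
    exact ⟨M.Pi [x, x'], (Sg_mul hS hSD hsub hobj hx hx').1,
      ((Sg_mul hS hSD hsub hobj hx hx').2).symm⟩

include hS hSD hsub hobj in
lemma Sg_chainSub (g : L) : IsChainSub M Δ g (M.Sg S g) := by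
  obtain ⟨P, hP⟩ := chainSub_exists hobj g
  have hPS : P ⊆ S := hsub P hP.1
  have hPsubSg : P ⊆ M.Sg S g := by
    intro a ha
    exact ⟨hPS ha, hP.2.1 a ha, hsub _ hP.2.2 ⟨a, ha, rfl⟩⟩
  have hTΔ : M.Sg S g ∈ Δ :=
    delta_interval hS hSD hsub hobj hP.1 (Sg_isSubgroup hS hSD hsub hobj g)
      hPsubSg (fun _ hx => hx.1)
  have hT'Δ : M.setConj (M.Sg S g) g ∈ Δ := by
    refine delta_interval hS hSD hsub hobj hP.2.2
      (Sg_image_isSubgroup hS hSD hsub hobj g) ?_ ?_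
    · rintro q ⟨a, ha, rfl⟩
      exact ⟨a, hPsubSg ha, rfl⟩
    · rintro y ⟨x, hx, rfl⟩; exact hx.2.2
  exact ⟨hTΔ, fun x hx => hx.2.1, hT'Δ⟩

include hS hSD hsub hobj in
lemma normalizer_conjable {g z : L} (hzS : z ∈ S)
    (hz : M.setConj (M.Sg S g) z = M.Sg S g) : [M.inv g, z, g] ∈ M.D := by
  have hT := Sg_chainSub hS hSD hsub hobj (g := g)
  have hQside := Qside (M := M) hT
  apply memD_of_chain hobj (X := M.setConj (M.Sg S g) g)
  rw [viaChain_cons]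
  refine ⟨hT.2.2, hQside.1, ?_⟩
  rw [hQside.2, viaChain_cons]
  refine ⟨hT.1, setConjDef_of_S hS (fun _ hx => hx.1) hzS, ?_⟩
  rw [hz, viaChain_cons]
  refine ⟨hT.1, hT.2.1, ?_⟩
  rw [viaChain_nil]
  exact hT.2.2

end Kthy


section Finale

open scoped Pointwise

variable {S : Set L} {Δ : Set (Set L)} {p : ℕ}
variable (hS : M.IsSubgroup S) (hSD : S ∈ Δ) (hsub : ∀ X ∈ Δ, X ⊆ S)
  (hobj : M.Objective Δ)

lemma subgroup_closed {X : Set L} (hX : M.IsSubgroup X) :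
    M.one ∈ X ∧ (∀ x ∈ X, M.inv x ∈ X) ∧ ∀ x ∈ X, ∀ y ∈ X, M.Pi [x, y] ∈ X := by
  have hmul : ∀ x ∈ X, ∀ y ∈ X, M.Pi [x, y] ∈ X := by
    intro x hx y hy
    exact hX.1.2.2 [x, y] (Scons hx (Scons hy Snil)) (hX.2 _ (Scons hx (Scons hy Snil)))
  exact ⟨one_mem_of_closed hX.1.1 hX.1.2.1 hmul, hX.1.2.1, hmul⟩

include hS hSD hsub hobj in
lemma normal_subset_Sg (hfin : Finite L) (hp : p.Prime)
    (hcard : ∃ n : ℕ, Nat.card S = p ^ n) {X : Set L}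
    (hX : M.IsSubgroup X) (hXS : X ⊆ S) (hXn : M.IsPartialNormal X) (g : L) :
    X ⊆ M.Sg S g := by
  classical
  have hTS : M.Sg S g ⊆ S := fun _ hx => hx.1
  have hXc := subgroup_closed hX
  have hTc := subgroup_closed (Sg_isSubgroup hS hSD hsub hobj g)
  have hyp : ∀ z ∈ X, M.setConj (M.Sg S g) z = M.Sg S g → z ∈ M.Sg S g := by
    intro z hz hnorm
    have hzS : z ∈ S := hXS hz
    have hmem := normalizer_conjable hS hSD hsub hobj hzS hnorm
    exact ⟨hzS, hmem, hXS (hXn.2 z hz g hmem)⟩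
  letI : Group (↥S) :=
  { mul := fun a b => ⟨M.Pi [a.1, b.1], S_pair_mem hS a.2 b.2⟩
    one := ⟨M.one, S_one_mem hS⟩
    inv := fun a => ⟨M.inv a.1, S_inv_mem hS a.2⟩
    mul_assoc := by
      rintro ⟨a, ha⟩ ⟨b, hb⟩ ⟨c, hc⟩
      apply Subtype.ext
      show M.Pi [M.Pi [a, b], c] = M.Pi [a, M.Pi [b, c]]
      have h3 : [a, b, c] ∈ M.D := S_word_mem hS (Scons ha (Scons hb (Scons hc Snil)))
      have e1 := M.Pi_assoc [] [a, b] [c] (by simpa using h3)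
      have e2 := M.Pi_assoc [a] [b, c] [] (by simpa using h3)
      simp only [List.cons_append, List.nil_append, List.append_nil] at e1 e2
      rw [← e1, ← e2]
    one_mul := by
      rintro ⟨a, ha⟩
      apply Subtype.ext
      show M.Pi [M.one, a] = a
      exact pi_one_pair a
    mul_one := by
      rintro ⟨a, ha⟩
      apply Subtype.ext
      show M.Pi [a, M.one] = a
      exact pi_pair_one a
    inv_mul_cancel := by
      rintro ⟨a, ha⟩
      apply Subtype.ext
      show M.Pi [M.inv a, a] = M.one
      exact pi_inv_pair a }
  let XS : Subgroup ↥S :=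
  { carrier := {a : ↥S | a.1 ∈ X}
    mul_mem' := fun {a b} ha hb => hXc.2.2 _ ha _ hb
    one_mem' := hXc.1
    inv_mem' := fun {a} ha => hXc.2.1 _ ha }
  let TS : Subgroup ↥S :=
  { carrier := {a : ↥S | a.1 ∈ M.Sg S g}
    mul_mem' := fun {a b} ha hb => hTc.2.2 _ ha _ hb
    one_mem' := hTc.1
    inv_mem' := fun {a} ha => hTc.2.1 _ ha }
  haveI hXSnormal : XS.Normal := by
    constructor
    intro n hn gg
    show (gg * n * gg⁻¹).1 ∈ X
    have hcoe : (gg * n * gg⁻¹).1 = M.Pi [M.Pi [gg.1, n.1], M.inv gg.1] := rfl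
    have h3 : [gg.1, n.1, M.inv gg.1] ∈ M.D :=
      S_word_mem hS (Scons gg.2 (Scons (hXS hn) (Scons (S_inv_mem hS gg.2) Snil)))
    have e := M.Pi_assoc [] [gg.1, n.1] [M.inv gg.1] (by simpa using h3)
    simp only [List.cons_append, List.nil_append] at e
    have hconj : M.conj n.1 (M.inv gg.1) = M.Pi [M.Pi [gg.1, n.1], M.inv gg.1] := by
      have h4 : M.conj n.1 (M.inv gg.1) = M.Pi [gg.1, n.1, M.inv gg.1] := by
        rw [conj, M.inv_inv]
      rw [h4, e]
    rw [hcoe, ← hconj]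
    refine hXn.2 n.1 hn (M.inv gg.1) ?_
    rw [show [M.inv (M.inv gg.1), n.1, M.inv gg.1]
      = [gg.1, n.1, M.inv gg.1] from by rw [M.inv_inv]]
    exact h3
  have hconj_coe : ∀ a b : ↥S, M.conj a.1 b.1 = (b⁻¹ * a * b).1 := by
    rintro ⟨a, ha⟩ ⟨b, hb⟩
    show M.conj a b = M.Pi [M.Pi [M.inv b, a], b]
    have h3 : [M.inv b, a, b] ∈ M.D :=
      S_word_mem hS (Scons (S_inv_mem hS hb) (Scons ha (Scons hb Snil)))
    have e := M.Pi_assoc [] [M.inv b, a] [b] (by simpa using h3)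
    simp only [List.cons_append, List.nil_append] at e
    exact e
  have hbridge : ∀ m : ↥S, m ∈ Subgroup.normalizer (TS : Set ↥S) →
      M.setConj (M.Sg S g) m.1 = M.Sg S g := by
    intro m hm
    ext y
    constructor
    · rintro ⟨x, hxT, rfl⟩
      have hxS' : x ∈ S := hTS hxT
      have h1 := (Subgroup.mem_normalizer_iff''.mp hm ⟨x, hxS'⟩).mp hxT
      rw [hconj_coe ⟨x, hxS'⟩ m]
      exact h1
    · intro hy
      have hyS' : y ∈ S := hTS hy
      have h1 := (Subgroup.mem_normalizer_iff.mp hm ⟨y, hyS'⟩).mp hy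
      refine ⟨(m * ⟨y, hyS'⟩ * m⁻¹).1, ?_, ?_⟩
      · exact h1
      rw [hconj_coe (m * ⟨y, hyS'⟩ * m⁻¹) m]
      have hgrp : m⁻¹ * (m * ⟨y, hyS'⟩ * m⁻¹) * m = (⟨y, hyS'⟩ : ↥S) := by group
      rw [hgrp]
  have keyle : XS ≤ TS := by
    by_contra hns
    haveI : Fact p.Prime := ⟨hp⟩
    haveI : Finite (↥S) := Subtype.finite
    obtain ⟨nn, hn⟩ := hcard
    have hpg : IsPGroup p ↥S := IsPGroup.of_card hn
    have hTJ : TS ≤ XS ⊔ TS := le_sup_right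
    have hXJ : XS ≤ XS ⊔ TS := le_sup_left
    have hpJ : IsPGroup p ↥(XS ⊔ TS) := hpg.to_subgroup _
    haveI : Group.IsNilpotent ↥(XS ⊔ TS) := hpJ.isNilpotent
    have hNC : NormalizerCondition ↥(XS ⊔ TS) := normalizerCondition_of_isNilpotent
    have hne : TS.subgroupOf (XS ⊔ TS) < ⊤ := by
      rcases lt_or_eq_of_le (le_top : TS.subgroupOf (XS ⊔ TS) ≤ ⊤) with h | h
      · exact h
      · exact absurd (fun x hx => Subgroup.subgroupOf_eq_top.mp h (hXJ hx)) hns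
    have hlt := hNC _ hne
    obtain ⟨n, hnN, hnT⟩ := SetLike.exists_of_lt hlt
    have hmN : (↑n : ↥S) ∈ Subgroup.normalizer (TS : Set ↥S) := by
      rw [Subgroup.mem_normalizer_iff]
      intro h
      constructor
      · intro hh
        have h' : (⟨h, hTJ hh⟩ : ↥(XS ⊔ TS)) ∈ TS.subgroupOf (XS ⊔ TS) :=
          Subgroup.mem_subgroupOf.mpr hh
        have h2 := (Subgroup.mem_normalizer_iff.mp hnN ⟨h, hTJ hh⟩).mp h'
        exact Subgroup.mem_subgroupOf.mp h2
      · intro hh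
        have hJmem : h ∈ XS ⊔ TS := by
          have h2 : (↑n : ↥S)⁻¹ * ((↑n : ↥S) * h * (↑n : ↥S)⁻¹) * (↑n : ↥S)
              ∈ XS ⊔ TS := mul_mem (mul_mem (inv_mem n.2) (hTJ hh)) n.2
          have h3 : (↑n : ↥S)⁻¹ * ((↑n : ↥S) * h * (↑n : ↥S)⁻¹) * (↑n : ↥S) = h := by
            group
          rwa [h3] at h2
        have h' := (Subgroup.mem_normalizer_iff.mp hnN ⟨h, hJmem⟩).mpr
          (Subgroup.mem_subgroupOf.mpr hh)
        exact Subgroup.mem_subgroupOf.mp h'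
    have hmXSTS : (↑n : ↥S) ∈ (XS : Set ↥S) * (TS : Set ↥S) := by
      rw [← Subgroup.normal_mul]
      exact n.2
    obtain ⟨x, hxX, t, htT, hxt⟩ := hmXSTS
    have hxN : x ∈ Subgroup.normalizer (TS : Set ↥S) := by
      have h2 : t⁻¹ ∈ Subgroup.normalizer (TS : Set ↥S) := TS.le_normalizer (inv_mem htT)
      have h3 : x = ↑n * t⁻¹ := by rw [← hxt]; group
      rw [h3]
      exact mul_mem hmN h2
    have hxT : x ∈ TS := hyp x.1 hxX (hbridge x hxN)
    have hfinal : (↑n : ↥S) ∈ TS := by rw [← hxt]; exact mul_mem hxT htT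
    exact hnT (Subgroup.mem_subgroupOf.mpr hfinal)
  intro x hx
  exact keyle (show (⟨x, hXS hx⟩ : ↥S) ∈ XS from hx)

include hS hSD hsub hobj in
lemma normal_subset_K (hfin : Finite L) (hp : p.Prime)
    (hcard : ∃ n : ℕ, Nat.card S = p ^ n) {X : Set L}
    (hX : M.IsSubgroup X) (hXS : X ⊆ S) (hXn : M.IsPartialNormal X) :
    X ⊆ ⋂ w : List L, M.Sw S w := by
  suffices h : ∀ (w : List L) (x : L), x ∈ X → x ∈ M.Sw S w by
    intro x hx
    rw [Set.mem_iInter]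
    intro w
    exact h w x hx
  intro w
  induction w with
  | nil => intro x hx; exact hXS hx
  | cons g w ih =>
    intro x hx
    have hxg := normal_subset_Sg hS hSD hsub hobj hfin hp hcard hX hXS hXn g hx
    exact ⟨hXS hx, hxg.2.1, ih _ (hXn.2 x hx g hxg.2.1)⟩

end Finale

end PartialGroupOn

open PartialGroupOn

variable {L : Type u}

theorem Op_largest_normal_psubgroup (M : PartialGroupOn L) (p : ℕ)
    (Δ : Set (Set L)) (S : Set L) (hloc : M.IsLocality p Δ S) :
    M.IsSubgroup (⋂ w : List L, M.Sw S w) ∧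
    (⋂ w : List L, M.Sw S w) ⊆ S ∧
    M.IsPartialNormal (⋂ w : List L, M.Sw S w) ∧
    ∀ X : Set L, M.IsSubgroup X → X ⊆ S → M.IsPartialNormal X →
      X ⊆ ⋂ w : List L, M.Sw S w := by
  obtain ⟨hp, hfin, hSD, hsub, hobj, hPS, hmax⟩ := hloc
  have hS : M.IsSubgroup S := hPS.1
  have hcard := hPS.2
  refine ⟨K_isSubgroup hS hSD hsub hobj, K_subset_S, ?_, ?_⟩
  · exact ⟨(K_isSubgroup hS hSD hsub hobj).1, fun x hx g _ => K_conj_mem hx g⟩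
  · intro X hX hXS hXn
    exact normal_subset_K hS hSD hsub hobj hfin hp hcard hX hXS hXn
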